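/- Let f be a neighbor function that is unbounded above, and let g : [f(0), ∞) → [0,∞) be the inverse of f (so g(f(x)) = x for all x ≥ 0 and f(g(a)) = a for all a ≥ f(0)). Then for all 0 < x ≤ y and every t ≥ 0, one has g(f(y) + t)/y ≤ g(f(x) + t)/x. -/

import Mathlib

/-- A neighbor function: strictly increasing, continuous and concave on `[0, ∞)`,
and such that `x ↦ f (exp x)` is convex on `ℝ`. -/
def IsNeighborFun (f : ℝ → ℝ) : Prop :=
  StrictMonoOn f (Set.Ici (0 : ℝ)) ∧ ContinuousOn f (Set.Ici (0 : ℝ)) ∧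
    ConcaveOn ℝ (Set.Ici (0 : ℝ)) f ∧ ConvexOn ℝ Set.univ (fun x => f (Real.exp x))

lemma four_point {F : ℝ → ℝ} (hF : ConvexOn ℝ Set.univ F) {α β γ δ : ℝ}
    (hαβ : α ≤ β) (hαγ : α ≤ γ) (hsum : β + γ = α + δ) :
    F β + F γ ≤ F α + F δ := by
  rcases eq_or_lt_of_le (show α ≤ δ by linarith) with h | h
  · have hβ : β = α := by linarith
    have hγ : γ = α := by linarith
    rw [hβ, hγ, ← h]
  · set l : ℝ := (δ - β) / (δ - α) with hl
    have hd : (0:ℝ) < δ - α := by linarith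
    have hl0 : 0 ≤ l := div_nonneg (by linarith) hd.le
    have hl1 : 0 ≤ 1 - l := by
      have : l ≤ 1 := (div_le_one hd).2 (by linarith)
      linarith
    have h1 : F (l • α + (1 - l) • δ) ≤ l • F α + (1 - l) • F δ :=
      hF.2 (Set.mem_univ α) (Set.mem_univ δ) hl0 hl1 (by ring)
    have h2 : F ((1 - l) • α + l • δ) ≤ (1 - l) • F α + l • F δ :=
      hF.2 (Set.mem_univ α) (Set.mem_univ δ) hl1 hl0 (by ring)
    have e1 : l • α + (1 - l) • δ = β := by
      simp only [smul_eq_mul, hl]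
      field_simp
      ring
    have e2 : (1 - l) • α + l • δ = γ := by
      have hγ' : γ = α + δ - β := by linarith
      simp only [smul_eq_mul, hl, hγ']
      field_simp
      ring
    rw [e1] at h1
    rw [e2] at h2
    simp only [smul_eq_mul] at h1 h2
    linarith

theorem inverse_shift_up_relative_antitone (f g : ℝ → ℝ) (hf : IsNeighborFun f)
    (hub : ∀ M : ℝ, ∃ x : ℝ, 0 ≤ x ∧ M ≤ f x)
    (hg0 : ∀ a : ℝ, f 0 ≤ a → 0 ≤ g a)
    (hgf : ∀ x : ℝ, 0 ≤ x → g (f x) = x)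
    (hfg : ∀ a : ℝ, f 0 ≤ a → f (g a) = a)
    (x y t : ℝ) (hx : 0 < x) (hxy : x ≤ y) (ht : 0 ≤ t) :
    g (f y + t) / y ≤ g (f x + t) / x := by
  obtain ⟨hsm, _, _, hcvx⟩ := hf
  have hy : (0:ℝ) < y := hx.trans_le hxy
  -- g is monotone on [f 0, ∞)
  have hgmono : ∀ u v : ℝ, f 0 ≤ u → f 0 ≤ v → u ≤ v → g u ≤ g v := by
    intro u v hu hv huv
    by_contra h
    push_neg at h
    have := hsm (hg0 v hv) (hg0 u hu) h
    rw [hfg u hu, hfg v hv] at this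
    linarith
  have hf0x : f 0 ≤ f x := (hsm.monotoneOn (le_refl (0:ℝ)) hx.le hx.le)
  have hf0y : f 0 ≤ f y := (hsm.monotoneOn (le_refl (0:ℝ)) (hx.le.trans hxy) (hx.le.trans hxy))
  have hfxy : f x ≤ f y := hsm.monotoneOn hx.le (hx.le.trans hxy) hxy
  have hf0xt : f 0 ≤ f x + t := by linarith
  have hf0yt : f 0 ≤ f y + t := by linarith
  have hgx : g (f x) = x := hgf x hx.le
  have hgy : g (f y) = y := hgf y (hx.le.trans hxy)
  have hxgxt : x ≤ g (f x + t) := by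
    have := hgmono (f x) (f x + t) hf0x hf0xt (by linarith)
    rwa [hgx] at this
  have hygyt : y ≤ g (f y + t) := by
    have := hgmono (f y) (f y + t) hf0y hf0yt (by linarith)
    rwa [hgy] at this
  have hgxt : (0:ℝ) < g (f x + t) := hx.trans_le hxgxt
  have hgyt : (0:ℝ) < g (f y + t) := hy.trans_le hygyt
  set F : ℝ → ℝ := fun u => f (Real.exp u) with hF
  have hFsm : StrictMono F := fun u v h =>
    hsm (Real.exp_pos u).le (Real.exp_pos v).le (Real.exp_lt_exp.2 h)
  -- F (log (g a)) = a for a ≥ f 0 with g a > 0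
  have hFH : ∀ a : ℝ, f 0 ≤ a → 0 < g a → F (Real.log (g a)) = a := by
    intro a ha hga
    simp only [hF, Real.exp_log hga, hfg a ha]
  set α := Real.log x with hα
  set β := Real.log y with hβ
  set γ := Real.log (g (f x + t)) with hγ
  have hαβ : α ≤ β := Real.log_le_log hx hxy
  have hαγ : α ≤ γ := Real.log_le_log hx hxgxt
  have key : F β + F γ ≤ F α + F (β + γ - α) :=
    four_point hcvx hαβ hαγ (by ring)
  have hFα : F α = f x := by
    have := hFH (f x) hf0x (by rw [hgx]; exact hx)
    rwa [hgx] at this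
  have hFβ : F β = f y := by
    have := hFH (f y) hf0y (by rw [hgy]; exact hy)
    rwa [hgy] at this
  have hFγ : F γ = f x + t := hFH (f x + t) hf0xt hgxt
  have hFyt : F (Real.log (g (f y + t))) = f y + t := hFH (f y + t) hf0yt hgyt
  have hle : F (Real.log (g (f y + t))) ≤ F (β + γ - α) := by
    rw [hFyt]; rw [hFα, hFβ, hFγ] at key; linarith
  have hlog : Real.log (g (f y + t)) ≤ β + γ - α := hFsm.le_iff_le.1 hle
  -- exponentiate
  have hmul : g (f y + t) * x ≤ g (f x + t) * y := by
    have h1 : Real.log (g (f y + t) * x) ≤ Real.log (g (f x + t) * y) := by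
      rw [Real.log_mul hgyt.ne' hx.ne', Real.log_mul hgxt.ne' hy.ne']
      have : Real.log (g (f y + t)) + α ≤ γ + β := by linarith
      linarith [this]
    exact (Real.log_le_log_iff (by positivity) (by positivity)).1 h1
  rw [div_le_div_iff₀ hy hx]
  linarith
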